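/- Let P be a partial monoid and R_P its associated semi-Thue system. Then ⇒_R is confluent if and only if every essential critical pair of R_P converges. -/

import Mathlib

/-- A partial monoid: a type `P` with a partial multiplication (encoded as a total
function `mul` together with a domain predicate `dom`; the value of `mul` is only
meaningful on `dom`) and a total identity `one`. -/
structure PartialMonoid (P : Type*) where
  dom : P → P → Prop
  mul : P → P → P
  one : P
  dom_one_right : ∀ x, dom x one
  dom_one_left : ∀ x, dom one x
  mul_one : ∀ x, mul x one = x
  one_mul : ∀ x, mul one x = x
  dom_assoc : ∀ x y z, (dom x y ∧ dom (mul x y) z) ↔ (dom y z ∧ dom x (mul y z))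
  mul_assoc : ∀ x y z, dom x y → dom (mul x y) z → mul (mul x y) z = mul x (mul y z)

/-- One-step reduction `⇒_R` of the semi-Thue system `R_P` associated with the
partial monoid `P`: contract a composable factor `x·y` to `x×y`, or erase a
letter `1_P`. -/
inductive Red {P : Type*} (M : PartialMonoid P) : List P → List P → Prop
  | mul (u v : List P) (x y : P) (h : M.dom x y) :
      Red M (u ++ x :: y :: v) (u ++ M.mul x y :: v)
  | one (u v : List P) : Red M (u ++ M.one :: v) (u ++ v)

/-- A word is irreducible (a normal form) if no one-step reduction applies to it. -/
def Irr {P : Type*} (M : PartialMonoid P) (w : List P) : Prop :=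
  ¬ ∃ w', Red M w w'

/-- Confluence of a relation. -/
def Confluent {α : Type*} (r : α → α → Prop) : Prop :=
  ∀ a b c, Relation.ReflTransGen r a b → Relation.ReflTransGen r a c →
    ∃ d, Relation.ReflTransGen r b d ∧ Relation.ReflTransGen r c d

section Aux

open Relation

variable {P : Type*} {M : PartialMonoid P}

/-- Rules of the semi-Thue system. -/
inductive Rule (M : PartialMonoid P) : List P → List P → Prop
  | mul (x y : P) (h : M.dom x y) : Rule M [x, y] [M.mul x y]
  | one : Rule M [M.one] []

lemma red_of_rule {l r : List P} (h : Rule M l r) (u v : List P) :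
    Red M (u ++ l ++ v) (u ++ r ++ v) := by
  cases h with
  | mul x y h => simpa using Red.mul u v x y h
  | one => simpa using Red.one u v

lemma red_iff {a b : List P} :
    Red M a b ↔ ∃ u l r v, Rule M l r ∧ a = u ++ l ++ v ∧ b = u ++ r ++ v := by
  constructor
  · intro h
    cases h with
    | mul u v x y h =>
        exact ⟨u, [x, y], [M.mul x y], v, Rule.mul x y h, by simp, by simp⟩
    | one u v => exact ⟨u, [M.one], [], v, Rule.one, by simp, by simp⟩
  · rintro ⟨u, l, r, v, h, rfl, rfl⟩
    exact red_of_rule h u v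

lemma red_append_left {s t : List P} (u : List P) (h : Red M s t) :
    Red M (u ++ s) (u ++ t) := by
  rcases red_iff.mp h with ⟨u', l, r, v, hr, rfl, rfl⟩
  have := red_of_rule hr (u ++ u') v
  simpa [List.append_assoc] using this

lemma red_append_right {s t : List P} (v : List P) (h : Red M s t) :
    Red M (s ++ v) (t ++ v) := by
  rcases red_iff.mp h with ⟨u', l, r, v', hr, rfl, rfl⟩
  have := red_of_rule hr u' (v' ++ v)
  simpa [List.append_assoc] using this

lemma rtg_append_left {s t : List P} (u : List P)
    (h : ReflTransGen (Red M) s t) :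
    ReflTransGen (Red M) (u ++ s) (u ++ t) :=
  ReflTransGen.lift (u ++ ·) (fun _ _ h => red_append_left u h) _ _ h

lemma rtg_append_right {s t : List P} (v : List P)
    (h : ReflTransGen (Red M) s t) :
    ReflTransGen (Red M) (s ++ v) (t ++ v) :=
  ReflTransGen.lift (· ++ v) (fun _ _ h => red_append_right v h) _ _ h

lemma rtg_of_eq {a b : List P} (h : a = b) : ReflTransGen (Red M) a b :=
  h ▸ ReflTransGen.refl

lemma red_length {a b : List P} (h : Red M a b) : b.length + 1 = a.length := by
  cases h <;> simp <;> omega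

/-- Core overlap analysis: two redexes in the same word converge, assuming
all essential critical pairs converge. -/
lemma core
    (H : ∀ x y z : P, M.dom x y → M.dom y z →
        ∃ w : List P,
          ReflTransGen (Red M) [M.mul x y, z] w ∧
          ReflTransGen (Red M) [x, M.mul y z] w)
    {l₁ r₁ l₂ r₂ : List P} (h₁ : Rule M l₁ r₁) (h₂ : Rule M l₂ r₂)
    (w v₁ v₂ : List P) (heq : l₁ ++ v₁ = w ++ l₂ ++ v₂) :
    ∃ d, ReflTransGen (Red M) (r₁ ++ v₁) d ∧
      ReflTransGen (Red M) (w ++ r₂ ++ v₂) d := by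
  cases h₁ with
  | one =>
    cases w with
    | nil =>
      cases h₂ with
      | one =>
        simp only [List.nil_append, List.cons_append, List.cons.injEq] at heq
        obtain ⟨-, rfl⟩ := heq
        exact ⟨v₁, rtg_of_eq (by simp), rtg_of_eq (by simp)⟩
      | mul x y hxy =>
        simp only [List.nil_append, List.cons_append, List.cons.injEq] at heq
        obtain ⟨rfl, rfl⟩ := heq
        exact ⟨y :: v₂, rtg_of_eq (by simp), rtg_of_eq (by simp [M.one_mul])⟩
    | cons t w' =>
      simp only [List.cons_append, List.append_assoc, List.cons.injEq,
        List.nil_append] at heq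
      obtain ⟨rfl, rfl⟩ := heq
      refine ⟨w' ++ r₂ ++ v₂, ReflTransGen.single ?_, ReflTransGen.single ?_⟩
      · simpa [List.append_assoc] using red_of_rule h₂ w' v₂
      · simpa [List.append_assoc] using Red.one ([] : List P) (w' ++ r₂ ++ v₂)
  | mul x y hxy =>
    cases w with
    | nil =>
      cases h₂ with
      | one =>
        simp only [List.nil_append, List.cons_append, List.cons.injEq] at heq
        obtain ⟨rfl, rfl⟩ := heq
        exact ⟨y :: v₁, rtg_of_eq (by simp [M.one_mul]), rtg_of_eq (by simp)⟩
      | mul x' y' h' =>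
        simp only [List.nil_append, List.cons_append, List.cons.injEq] at heq
        obtain ⟨rfl, rfl, rfl⟩ := heq
        exact ⟨M.mul x y :: v₁, rtg_of_eq (by simp), rtg_of_eq (by simp)⟩
    | cons t w' =>
      cases w' with
      | nil =>
        cases h₂ with
        | one =>
          simp only [List.cons_append, List.nil_append, List.cons.injEq] at heq
          obtain ⟨rfl, rfl, rfl⟩ := heq
          exact ⟨x :: v₁, rtg_of_eq (by simp [M.mul_one]), rtg_of_eq (by simp)⟩
        | mul y' z hyz =>
          simp only [List.cons_append, List.nil_append, List.cons.injEq] at heq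
          obtain ⟨rfl, rfl, rfl⟩ := heq
          obtain ⟨w0, hw1, hw2⟩ := H _ _ _ hxy hyz
          refine ⟨w0 ++ v₂, ?_, ?_⟩
          · simpa using rtg_append_right v₂ hw1
          · simpa using rtg_append_right v₂ hw2
      | cons t' w'' =>
        simp only [List.cons_append, List.append_assoc, List.cons.injEq] at heq
        obtain ⟨rfl, rfl, rfl⟩ := heq
        refine ⟨M.mul x y :: (w'' ++ r₂ ++ v₂), ReflTransGen.single ?_,
          ReflTransGen.single ?_⟩
        · simpa [List.append_assoc] using
            red_of_rule h₂ (M.mul x y :: w'') v₂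
        · simpa [List.append_assoc] using
            Red.mul ([] : List P) (w'' ++ r₂ ++ v₂) x y hxy

lemma loc
    (H : ∀ x y z : P, M.dom x y → M.dom y z →
        ∃ w : List P,
          ReflTransGen (Red M) [M.mul x y, z] w ∧
          ReflTransGen (Red M) [x, M.mul y z] w) :
    ∀ a b c, Red M a b → Red M a c →
      ∃ d, ReflTransGen (Red M) b d ∧ ReflTransGen (Red M) c d := by
  intro a b c hab hac
  rcases red_iff.mp hab with ⟨u₁, l₁, r₁, v₁, h₁, rfl, rfl⟩
  rcases red_iff.mp hac with ⟨u₂, l₂, r₂, v₂, h₂, heq, rfl⟩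
  rw [List.append_assoc, List.append_assoc] at heq
  rcases List.append_eq_append_iff.mp heq with ⟨w, rfl, hb⟩ | ⟨w, rfl, hb⟩
  · obtain ⟨d, hd1, hd2⟩ := core H h₁ h₂ w v₁ v₂ (by
      simpa [List.append_assoc] using hb)
    refine ⟨u₁ ++ d, ?_, ?_⟩
    · simpa [List.append_assoc] using rtg_append_left u₁ hd1
    · simpa [List.append_assoc] using rtg_append_left u₁ hd2
  · obtain ⟨d, hd1, hd2⟩ := core H h₂ h₁ w v₂ v₁ (by
      simpa [List.append_assoc] using hb)
    refine ⟨u₂ ++ d, ?_, ?_⟩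
    · simpa [List.append_assoc] using rtg_append_left u₂ hd2
    · simpa [List.append_assoc] using rtg_append_left u₂ hd1

/-- Newman's lemma for `Red`, which decreases length. -/
lemma newman
    (loc' : ∀ a b c, Red M a b → Red M a c →
      ∃ d, ReflTransGen (Red M) b d ∧ ReflTransGen (Red M) c d) :
    Confluent (Red M) := by
  suffices h : ∀ n (a : List P), a.length ≤ n → ∀ b c,
      ReflTransGen (Red M) a b → ReflTransGen (Red M) a c →
      ∃ d, ReflTransGen (Red M) b d ∧ ReflTransGen (Red M) c d by
    intro a b c hab hac
    exact h a.length a le_rfl b c hab hac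
  intro n
  induction n with
  | zero =>
    intro a ha b c hab hac
    rcases hab.cases_head with rfl | ⟨b₁, hab₁, _⟩
    · exact ⟨c, hac, ReflTransGen.refl⟩
    · have := red_length hab₁
      omega
  | succ n ih =>
    intro a ha b c hab hac
    rcases hab.cases_head with rfl | ⟨b₁, hab₁, hb₁b⟩
    · exact ⟨c, hac, ReflTransGen.refl⟩
    rcases hac.cases_head with rfl | ⟨c₁, hac₁, hc₁c⟩
    · exact ⟨b, ReflTransGen.refl, hab⟩
    obtain ⟨d, hbd, hcd⟩ := loc' a b₁ c₁ hab₁ hac₁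
    have hb₁ : b₁.length ≤ n := by have := red_length hab₁; omega
    have hc₁ : c₁.length ≤ n := by have := red_length hac₁; omega
    obtain ⟨e, hbe, hde⟩ := ih b₁ hb₁ b d hb₁b hbd
    obtain ⟨f, hcf, hef⟩ := ih c₁ hc₁ c e hc₁c (hcd.trans hde)
    exact ⟨f, hbe.trans hef, hcf⟩

end Aux

/-- `⇒_R` is confluent iff every essential critical pair converges.
An essential critical pair is a pair `(a·z, x·b)` with `a = x×y`, `b = y×z` for some
`y` with `(x,y), (y,z) ∈ dom(×)`; it converges when both words reduce (in many steps)
to a common word. -/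
theorem confluent_iff_essential_critical_pairs_converge
    {P : Type*} (M : PartialMonoid P) :
    Confluent (Red M) ↔
      ∀ x y z : P, M.dom x y → M.dom y z →
        ∃ w : List P,
          Relation.ReflTransGen (Red M) [M.mul x y, z] w ∧
          Relation.ReflTransGen (Red M) [x, M.mul y z] w := by
  constructor
  · intro hc x y z hxy hyz
    have s1 : Red M [x, y, z] [M.mul x y, z] := by
      simpa using Red.mul ([] : List P) [z] x y hxy
    have s2 : Red M [x, y, z] [x, M.mul y z] := by
      simpa using Red.mul [x] ([] : List P) y z hyz
    exact hc _ _ _ (Relation.ReflTransGen.single s1)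
      (Relation.ReflTransGen.single s2)
  · intro H
    exact newman (loc H)
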